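/- (Relation between metric and combinatorial isoperimetric constants) Assume ℓ*(G) < ∞. Then 2·α_comb(V)/(ℓ*(G)·(1 + α_comb(V))) ≤ α(G); if moreover ℓ_*(G) > 0, then α(G) ≤ 2·α_comb(V)/ℓ_*(G). -/

import Mathlib

open scoped Classical ENNReal
open MeasureTheory

noncomputable section

/-- A real function on `[0, L]` which is continuous and piecewise continuously
differentiable: there is a finite partition `0 = x 0 < x 1 < ... < x n = L` such that
on each closed piece the function has a continuous derivative. -/
def PiecewiseC1 (f : ℝ → ℝ) (L : ℝ) : Prop :=
  ContinuousOn f (Set.Icc 0 L) ∧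
  ∃ (n : ℕ) (x : Fin (n + 1) → ℝ), x 0 = 0 ∧ x (Fin.last n) = L ∧ StrictMono x ∧
    ∀ i : Fin n, ∃ g : ℝ → ℝ,
      ContinuousOn g (Set.Icc (x i.castSucc) (x i.succ)) ∧
      ∀ t ∈ Set.Icc (x i.castSucc) (x i.succ),
        HasDerivWithinAt f (g t) (Set.Icc (x i.castSucc) (x i.succ)) t

/-- The underlying (unoriented) simple graph of a set of edges `E` with endpoint
map `ends : E → V × V`. -/
def graphOf {V E : Type} (ends : E → V × V) : SimpleGraph V :=
  SimpleGraph.fromRel fun u v => ∃ e, ends e = (u, v)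

/-- A metric graph: a connected, locally finite, simple combinatorial graph with
countably infinite vertex and edge sets, each edge having a finite positive length.
Each edge carries an (auxiliary) orientation given by `ends`. -/
structure MetricGraph : Type 1 where
  V : Type
  E : Type
  countV : Countable V
  infV : Infinite V
  countE : Countable E
  infE : Infinite E
  ends : E → V × V
  len : E → ℝ
  len_pos : ∀ e, 0 < len e
  no_loops : ∀ e, (ends e).1 ≠ (ends e).2
  no_multi : Function.Injective fun e => Sym2.mk (ends e)
  locfin : ∀ v, {e | (ends e).1 = v ∨ (ends e).2 = v}.Finite
  conn : (graphOf ends).Connected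

namespace MetricGraph

/-- The underlying simple graph. -/
def graph (Γ : MetricGraph) : SimpleGraph Γ.V := graphOf Γ.ends

/-- The star of a vertex: the set of edges incident to it. -/
def star (Γ : MetricGraph) (v : Γ.V) : Set Γ.E :=
  {e | (Γ.ends e).1 = v ∨ (Γ.ends e).2 = v}

/-- Combinatorial degree of a vertex. -/
def degree (Γ : MetricGraph) (v : Γ.V) : ℕ := (Γ.locfin v).toFinset.card

/-- The vertices of a (finite) subgraph given by a finite set of edges. -/
def vertsOf (Γ : MetricGraph) (F : Finset Γ.E) : Finset Γ.V :=
  F.image (fun e => (Γ.ends e).1) ∪ F.image fun e => (Γ.ends e).2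

/-- The degree of a vertex inside the subgraph given by the edge set `F`. -/
def degIn (Γ : MetricGraph) (F : Finset Γ.E) (v : Γ.V) : ℕ :=
  (F.filter fun e => (Γ.ends e).1 = v ∨ (Γ.ends e).2 = v).card

/-- Connectedness of the subgraph spanned by the edge set `F`. -/
def SubConn (Γ : MetricGraph) (F : Finset Γ.E) : Prop :=
  ((SimpleGraph.fromRel fun u v => ∃ e ∈ F, Γ.ends e = (u, v)).induce
    (↑(Γ.vertsOf F) : Set Γ.V)).Connected

/-- A finite connected subgraph (with at least one edge), given by its edge set. -/
def IsFinSubgraph (Γ : MetricGraph) (F : Finset Γ.E) : Prop :=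
  F.Nonempty ∧ Γ.SubConn F

/-- The boundary of a finite subgraph with respect to `Γ`: the vertices whose degree
in the subgraph is strictly smaller than the degree in `Γ`. -/
def bdry (Γ : MetricGraph) (F : Finset Γ.E) : Finset Γ.V :=
  (Γ.vertsOf F).filter fun v => Γ.degIn F v < Γ.degree v

/-- `deg (∂_G G̃)`. -/
def degBdry (Γ : MetricGraph) (F : Finset Γ.E) : ℝ :=
  ∑ v ∈ Γ.bdry F, (Γ.degIn F v : ℝ)

/-- The total length (Lebesgue measure) of a finite subgraph. -/
def mes (Γ : MetricGraph) (F : Finset Γ.E) : ℝ := ∑ e ∈ F, Γ.len e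

/-- The isoperimetric (Cheeger) constant of a metric graph. -/
def alpha (Γ : MetricGraph) : ℝ :=
  sInf {r : ℝ | ∃ F : Finset Γ.E, Γ.IsFinSubgraph F ∧ r = Γ.degBdry F / Γ.mes F}

/-- The isoperimetric constant at infinity, as an element of `[0,∞]`. -/
def alphaEssEnn (Γ : MetricGraph) : ℝ≥0∞ :=
  ⨆ W : Finset Γ.E, ⨅ (F : Finset Γ.E) (_ : Γ.IsFinSubgraph F ∧ Disjoint F W),
    ENNReal.ofReal (Γ.degBdry F / Γ.mes F)

/-- The vertex weight `m(v) = Σ_{e ∈ E_v} |e|`. -/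
def mweight (Γ : MetricGraph) (v : Γ.V) : ℝ :=
  ∑ e ∈ (Γ.locfin v).toFinset, Γ.len e

/-- The set of boundary edges of a vertex set: edges with exactly one endpoint in `X`. -/
def Eb (Γ : MetricGraph) (X : Set Γ.V) : Set Γ.E :=
  {e | Xor' ((Γ.ends e).1 ∈ X) ((Γ.ends e).2 ∈ X)}

/-- The discrete isoperimetric constant of a vertex set `U`. -/
def alphaD (Γ : MetricGraph) (U : Set Γ.V) : ℝ :=
  sInf {r : ℝ | ∃ X : Finset Γ.V, ↑X ⊆ U ∧ X.Nonempty ∧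
    r = ((Γ.Eb ↑X).ncard : ℝ) / ∑ v ∈ X, Γ.mweight v}

/-- The discrete isoperimetric constant at infinity, as an element of `[0,∞]`. -/
def alphaDEssEnn (Γ : MetricGraph) : ℝ≥0∞ :=
  ⨆ X : Finset Γ.V, ENNReal.ofReal (Γ.alphaD (↑X : Set Γ.V)ᶜ)

/-- The combinatorial isoperimetric constant. -/
def alphaComb (Γ : MetricGraph) : ℝ :=
  sInf {r : ℝ | ∃ X : Finset Γ.V, X.Nonempty ∧
    r = ((Γ.Eb ↑X).ncard : ℝ) / ∑ v ∈ X, (Γ.degree v : ℝ)}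

/-- `ℓ*(G) = sup of edge lengths`. -/
def ellSup (Γ : MetricGraph) : ℝ := sSup (Set.range Γ.len)

/-- `ℓ_*(G) = inf of edge lengths`. -/
def ellInf (Γ : MetricGraph) : ℝ := sInf (Set.range Γ.len)

/-- `ℓ*(G)` as an element of `[0,∞]`. -/
def ellSupEnn (Γ : MetricGraph) : ℝ≥0∞ := ⨆ e : Γ.E, ENNReal.ofReal (Γ.len e)

/-- `ℓ*_ess(G) = inf_F sup_{e ∉ F} |e|` as an element of `[0,∞]`. -/
def ellSupEssEnn (Γ : MetricGraph) : ℝ≥0∞ :=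
  ⨅ W : Finset Γ.E, ⨆ e : {e : Γ.E // e ∉ W}, ENNReal.ofReal (Γ.len (e : Γ.E))

/-- Outgoing edges at a vertex (for the fixed orientation). -/
def plusE (Γ : MetricGraph) (v : Γ.V) : Set Γ.E := {e | (Γ.ends e).1 = v}

/-- Incoming edges at a vertex (for the fixed orientation). -/
def minusE (Γ : MetricGraph) (v : Γ.V) : Set Γ.E := {e | (Γ.ends e).2 = v}

/-- The curvature `K(v) = ((#E_v⁺ − #E_v⁻)/#E_v⁺) · inf_{e ∈ E_v⁺} 1/|e|`. -/
def Kcurv (Γ : MetricGraph) (v : Γ.V) : ℝ :=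
  (((Γ.plusE v).ncard : ℝ) - ((Γ.minusE v).ncard : ℝ)) / ((Γ.plusE v).ncard : ℝ) *
    sInf ((fun e => 1 / Γ.len e) '' Γ.plusE v)

/-- The combinatorial curvature `K_comb(v) = 1 − #E_v⁻/#E_v⁺`. -/
def Kcomb (Γ : MetricGraph) (v : Γ.V) : ℝ :=
  1 - ((Γ.minusE v).ncard : ℝ) / ((Γ.plusE v).ncard : ℝ)

/-- `liminf_{v ∈ V} K(v) = sup over finite W of inf_{v ∉ W} K(v)`, in `[0,∞]`. -/
def KcurvEssEnn (Γ : MetricGraph) : ℝ≥0∞ :=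
  ⨆ W : Finset Γ.V, ⨅ v : {v : Γ.V // v ∉ W}, ENNReal.ofReal (Γ.Kcurv (v : Γ.V))

/-- `liminf_{v ∈ V} K_comb(v) = sup over finite W of inf_{v ∉ W} K_comb(v)`. -/
def KcombLiminf (Γ : MetricGraph) : ℝ :=
  sSup (Set.range fun W : Finset Γ.V => sInf (Γ.Kcomb '' (↑W : Set Γ.V)ᶜ))

/-- The value of an edgewise function at an endpoint of an edge. -/
def endVal (Γ : MetricGraph) (f : Γ.E → ℝ → ℝ) (e : Γ.E) (v : Γ.V) : ℝ :=
  if (Γ.ends e).1 = v then f e 0 else f e (Γ.len e)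

/-- A test function on the metric graph `Γ`: a family of continuous, piecewise `C¹`
functions on the edges, matching at the vertices, vanishing on all but finitely
many edges. -/
structure TestFun (Γ : MetricGraph) where
  f : Γ.E → ℝ → ℝ
  piecewise : ∀ e, PiecewiseC1 (f e) (Γ.len e)
  vertexCont : ∀ e e' : Γ.E, ∀ v : Γ.V, e ∈ Γ.star v → e' ∈ Γ.star v →
    Γ.endVal f e v = Γ.endVal f e' v
  finSupp : {e : Γ.E | ∃ x ∈ Set.Icc 0 (Γ.len e), f e x ≠ 0}.Finite

/-- `‖f‖² = Σ_e ∫₀^{|e|} f_e(x)² dx`. -/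
def TestFun.normSq {Γ : MetricGraph} (φ : TestFun Γ) : ℝ :=
  ∑ᶠ e : Γ.E, ∫ x in (0:ℝ)..Γ.len e, (φ.f e x) ^ 2

/-- `‖f′‖² = Σ_e ∫₀^{|e|} f_e′(x)² dx`. -/
def TestFun.energySq {Γ : MetricGraph} (φ : TestFun Γ) : ℝ :=
  ∑ᶠ e : Γ.E, ∫ x in (0:ℝ)..Γ.len e, (deriv (φ.f e) x) ^ 2

/-- A test function is nonzero if it does not vanish identically on the graph. -/
def TestFun.Nonzero {Γ : MetricGraph} (φ : TestFun Γ) : Prop :=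
  ∃ e : Γ.E, ∃ x ∈ Set.Icc 0 (Γ.len e), φ.f e x ≠ 0

/-- The bottom of the spectrum of the Kirchhoff Laplacian, via the variational
(Rayleigh quotient) characterization. -/
def lambda0 (Γ : MetricGraph) : ℝ :=
  sInf {r : ℝ | ∃ φ : TestFun Γ, φ.Nonzero ∧ r = φ.energySq / φ.normSq}

end MetricGraph

/-- A weighted graph `(V, m, b)`: a connected, locally finite, simple combinatorial
graph with countably infinite vertex and edge sets, an edge weight `b` and a vertex
weight `m`. -/
structure WeightedGraph : Type 1 where
  V : Type
  E : Type
  countV : Countable V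
  infV : Infinite V
  countE : Countable E
  infE : Infinite E
  ends : E → V × V
  no_loops : ∀ e, (ends e).1 ≠ (ends e).2
  no_multi : Function.Injective fun e => Sym2.mk (ends e)
  locfin : ∀ v, {e | (ends e).1 = v ∨ (ends e).2 = v}.Finite
  conn : (graphOf ends).Connected
  b : E → ℝ
  b_pos : ∀ e, 0 < b e
  m : V → ℝ
  m_pos : ∀ v, 0 < m v

namespace WeightedGraph

/-- An edge weight `d` is intrinsic if `Σ_{e ∈ E_v} d(e)² b(e) ≤ m(v)` for all `v`. -/
def Intrinsic (Γ : WeightedGraph) (d : Γ.E → ℝ) : Prop :=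
  ∀ v, ∑ e ∈ (Γ.locfin v).toFinset, d e ^ 2 * Γ.b e ≤ Γ.m v

/-- The boundary edges of a vertex set: edges with exactly one endpoint in `X`. -/
def Eb (Γ : WeightedGraph) (X : Set Γ.V) : Set Γ.E :=
  {e | Xor' ((Γ.ends e).1 ∈ X) ((Γ.ends e).2 ∈ X)}

/-- The discrete isoperimetric constant `α_d(U)` with respect to the weight `d`. -/
def alphaD (Γ : WeightedGraph) (d : Γ.E → ℝ) (U : Set Γ.V) : ℝ :=
  sInf {r : ℝ | ∃ X : Finset Γ.V, ↑X ⊆ U ∧ X.Nonempty ∧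
    r = (∑ᶠ e ∈ Γ.Eb ↑X, d e * Γ.b e) / ∑ v ∈ X, Γ.m v}

/-- The discrete isoperimetric constant at infinity, in `[0,∞]`. -/
def alphaDEssEnn (Γ : WeightedGraph) (d : Γ.E → ℝ) : ℝ≥0∞ :=
  ⨆ X : Finset Γ.V, ENNReal.ofReal (Γ.alphaD d (↑X : Set Γ.V)ᶜ)

/-- The energy form `Q(u) = Σ_e b(e) (u(e_i) − u(e_0))²`. -/
def Q (Γ : WeightedGraph) (u : Γ.V → ℝ) : ℝ :=
  ∑ᶠ e : Γ.E, Γ.b e * (u (Γ.ends e).2 - u (Γ.ends e).1) ^ 2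

/-- The squared norm `Σ_v m(v) u(v)²`. -/
def normSqD (Γ : WeightedGraph) (u : Γ.V → ℝ) : ℝ :=
  ∑ᶠ v : Γ.V, Γ.m v * u v ^ 2

/-- The bottom of the spectrum of the Friedrichs extension of the weighted Laplacian,
via the variational characterization over finitely supported functions. -/
def lambda0 (Γ : WeightedGraph) : ℝ :=
  sInf {r : ℝ | ∃ u : Γ.V → ℝ, (Function.support u).Finite ∧ u ≠ 0 ∧
    r = Γ.Q u / Γ.normSqD u}

/-- The bottom of the essential spectrum of the Friedrichs extension, via Glazman's
decomposition principle, in `[0,∞]`. -/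
def lambda0EssEnn (Γ : WeightedGraph) : ℝ≥0∞ :=
  ⨆ X : Finset Γ.V, ⨅ (u : Γ.V → ℝ)
    (_ : (Function.support u).Finite ∧ u ≠ 0 ∧ ∀ v ∈ X, u v = 0),
      ENNReal.ofReal (Γ.Q u / Γ.normSqD u)

end WeightedGraph

end

section IsoperimetricAux

open Relation

namespace MetricGraph

variable (Γ : MetricGraph)

lemma mem_vertsOf_iff {Γ : MetricGraph} {F : Finset Γ.E} {v : Γ.V} :
    v ∈ Γ.vertsOf F ↔ ∃ e ∈ F, (Γ.ends e).1 = v ∨ (Γ.ends e).2 = v := by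
  simp only [vertsOf, Finset.mem_union, Finset.mem_image]
  constructor
  · rintro (⟨e, he, h⟩ | ⟨e, he, h⟩)
    · exact ⟨e, he, Or.inl h⟩
    · exact ⟨e, he, Or.inr h⟩
  · rintro ⟨e, he, h | h⟩
    · exact Or.inl ⟨e, he, h⟩
    · exact Or.inr ⟨e, he, h⟩

lemma exists_inc (v : Γ.V) : ∃ e : Γ.E, (Γ.ends e).1 = v ∨ (Γ.ends e).2 = v := by
  haveI := Γ.infV
  obtain ⟨w, hw⟩ : ∃ w : Γ.V, w ≠ v := by
    have := Infinite.instNontrivial (α := Γ.V)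
    exact exists_ne v
  have hreach := Γ.conn v w
  obtain ⟨p⟩ := hreach
  cases p with
  | nil => exact absurd rfl hw
  | cons hadj _ =>
    rename_i x _
    rw [graphOf, SimpleGraph.fromRel_adj] at hadj
    obtain ⟨-, ⟨e, he⟩ | ⟨e, he⟩⟩ := hadj
    · exact ⟨e, Or.inl (by rw [he])⟩
    · exact ⟨e, Or.inr (by rw [he])⟩

lemma degree_pos (v : Γ.V) : 0 < Γ.degree v := by
  obtain ⟨e, he⟩ := Γ.exists_inc v
  exact Finset.card_pos.mpr ⟨e, (Γ.locfin v).mem_toFinset.mpr he⟩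

lemma degIn_le_degree (F : Finset Γ.E) (v : Γ.V) : Γ.degIn F v ≤ Γ.degree v := by
  apply Finset.card_le_card
  intro e he
  exact (Γ.locfin v).mem_toFinset.mpr (Finset.mem_filter.mp he).2

lemma mem_of_degIn_eq {Γ : MetricGraph} {F : Finset Γ.E} {v : Γ.V}
    (hdeg : Γ.degIn F v = Γ.degree v) {e : Γ.E}
    (he : (Γ.ends e).1 = v ∨ (Γ.ends e).2 = v) : e ∈ F := by
  have hsub : F.filter (fun e => (Γ.ends e).1 = v ∨ (Γ.ends e).2 = v)
      ⊆ (Γ.locfin v).toFinset := by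
    intro x hx
    exact (Γ.locfin v).mem_toFinset.mpr (Finset.mem_filter.mp hx).2
  have heq := Finset.eq_of_subset_of_card_le hsub (le_of_eq hdeg.symm)
  have : e ∈ F.filter (fun e => (Γ.ends e).1 = v ∨ (Γ.ends e).2 = v) := by
    rw [heq]; exact (Γ.locfin v).mem_toFinset.mpr he
  exact (Finset.mem_filter.mp this).1

lemma sum_degIn_comm (F : Finset Γ.E) (W : Finset Γ.V) :
    ∑ v ∈ W, Γ.degIn F v
      = ∑ e ∈ F, (W.filter fun v => (Γ.ends e).1 = v ∨ (Γ.ends e).2 = v).card := by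
  unfold degIn
  simp_rw [Finset.card_filter]
  exact Finset.sum_comm

lemma handshake (F : Finset Γ.E) :
    ∑ v ∈ Γ.vertsOf F, Γ.degIn F v = 2 * F.card := by
  rw [Γ.sum_degIn_comm F (Γ.vertsOf F)]
  have key : ∀ e ∈ F,
      ((Γ.vertsOf F).filter fun v => (Γ.ends e).1 = v ∨ (Γ.ends e).2 = v).card = 2 := by
    intro e he
    have hfe : ((Γ.vertsOf F).filter fun v => (Γ.ends e).1 = v ∨ (Γ.ends e).2 = v)
        = {(Γ.ends e).1, (Γ.ends e).2} := by
      ext v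
      simp only [Finset.mem_filter, Finset.mem_insert, Finset.mem_singleton]
      constructor
      · rintro ⟨-, h | h⟩
        · exact Or.inl h.symm
        · exact Or.inr h.symm
      · rintro (rfl | rfl)
        · exact ⟨mem_vertsOf_iff.mpr ⟨e, he, Or.inl rfl⟩, Or.inl rfl⟩
        · exact ⟨mem_vertsOf_iff.mpr ⟨e, he, Or.inr rfl⟩, Or.inr rfl⟩
    rw [hfe, Finset.card_pair (Γ.no_loops e)]
  rw [Finset.sum_congr rfl key, Finset.sum_const, smul_eq_mul, mul_comm]

lemma Eb_finite (X : Finset Γ.V) : (Γ.Eb (↑X : Set Γ.V)).Finite := by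
  apply Set.Finite.subset (Set.Finite.biUnion X.finite_toSet fun v _ => Γ.locfin v)
  intro e he
  rcases he with ⟨h1, -⟩ | ⟨h2, -⟩
  · exact Set.mem_biUnion h1 (Or.inl rfl)
  · exact Set.mem_biUnion h2 (Or.inr rfl)

end MetricGraph

end IsoperimetricAux

lemma connected_induce_of {V : Type} (H : SimpleGraph V) (S : Set V) (hne : S.Nonempty)
    (h : ∀ u ∈ S, ∀ v ∈ S,
      Relation.ReflTransGen (fun a b => a ∈ S ∧ b ∈ S ∧ H.Adj a b) u v) :
    (H.induce S).Connected := by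
  rw [SimpleGraph.connected_iff]
  refine ⟨?_, ⟨⟨hne.choose, hne.choose_spec⟩⟩⟩
  rintro ⟨u, hu⟩ ⟨v, hv⟩
  have key : ∀ w, Relation.ReflTransGen (fun a b => a ∈ S ∧ b ∈ S ∧ H.Adj a b) u w →
      ∀ hw : w ∈ S, (H.induce S).Reachable ⟨u, hu⟩ ⟨w, hw⟩ := by
    intro w hw
    induction hw with
    | refl => intro _; exact SimpleGraph.Reachable.refl _
    | tail _ hstep ih =>
      intro hw
      exact (ih hstep.1).trans (SimpleGraph.Adj.reachable (by exact hstep.2.2))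
  exact key v (h u hu v hv) hv

namespace MetricGraph

lemma subConn_of_rtg {Γ : MetricGraph} {F : Finset Γ.E} (hF : F.Nonempty)
    (h : ∀ u ∈ Γ.vertsOf F, ∀ v ∈ Γ.vertsOf F,
      Relation.ReflTransGen (fun a b => a ∈ Γ.vertsOf F ∧ b ∈ Γ.vertsOf F ∧
        (SimpleGraph.fromRel fun u v => ∃ e ∈ F, Γ.ends e = (u, v)).Adj a b) u v) :
    Γ.SubConn F := by
  obtain ⟨e, he⟩ := hF
  apply connected_induce_of
  · exact ⟨(Γ.ends e).1, Finset.mem_coe.mpr (mem_vertsOf_iff.mpr ⟨e, he, Or.inl rfl⟩)⟩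
  · intro u hu v hv
    have := h u (Finset.mem_coe.mp hu) v (Finset.mem_coe.mp hv)
    exact Relation.ReflTransGen.mono (fun a b hab => ⟨Finset.mem_coe.mpr hab.1, Finset.mem_coe.mpr hab.2.1, hab.2.2⟩) _ _ this

lemma prod_eq_of_inc {Γ : MetricGraph} {e : Γ.E} {x y : Γ.V}
    (hx : (Γ.ends e).1 = x ∨ (Γ.ends e).2 = x)
    (hy : (Γ.ends e).1 = y ∨ (Γ.ends e).2 = y) (hxy : x ≠ y) :
    Γ.ends e = (x, y) ∨ Γ.ends e = (y, x) := by
  rcases hx with hx | hx <;> rcases hy with hy | hy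
  · exact absurd (hx ▸ hy) hxy
  · exact Or.inl (Prod.ext hx hy)
  · exact Or.inr (Prod.ext hy hx)
  · exact absurd (hx ▸ hy) hxy

lemma isFinSubgraph_single (Γ : MetricGraph) (e₀ : Γ.E) : Γ.IsFinSubgraph {e₀} := by
  refine ⟨⟨e₀, Finset.mem_singleton_self e₀⟩, ?_⟩
  apply subConn_of_rtg ⟨e₀, Finset.mem_singleton_self e₀⟩
  intro u hu v hv
  have hmem : ∀ w ∈ Γ.vertsOf ({e₀} : Finset Γ.E),
      (Γ.ends e₀).1 = w ∨ (Γ.ends e₀).2 = w := by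
    intro w hw
    obtain ⟨e, he, hinc⟩ := mem_vertsOf_iff.mp hw
    rw [Finset.mem_singleton] at he
    subst he
    exact hinc
  by_cases huv : u = v
  · subst huv; exact Relation.ReflTransGen.refl
  · refine Relation.ReflTransGen.single ⟨hu, hv, ?_⟩
    rw [SimpleGraph.fromRel_adj]
    refine ⟨huv, ?_⟩
    rcases Γ.prod_eq_of_inc (hmem u hu) (hmem v hv) huv with h | h
    · exact Or.inl ⟨e₀, Finset.mem_singleton_self e₀, h⟩
    · exact Or.inr ⟨e₀, Finset.mem_singleton_self e₀, h⟩

/-- The step relation for connectivity of a vertex set. -/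
def Rrel (Γ : MetricGraph) (X : Finset Γ.V) (u v : Γ.V) : Prop :=
  u ∈ X ∧ v ∈ X ∧ ∃ e, Γ.ends e = (u, v) ∨ Γ.ends e = (v, u)

lemma Rrel_symm (Γ : MetricGraph) (X : Finset Γ.V) : Symmetric (Γ.Rrel X) := by
  rintro a b ⟨ha, hb, e, he⟩
  exact ⟨hb, ha, e, he.symm⟩

/-- Connectivity of a finite vertex set within itself. -/
def ConnFinset (Γ : MetricGraph) (X : Finset Γ.V) : Prop :=
  ∀ u ∈ X, ∀ v ∈ X, Relation.ReflTransGen (Γ.Rrel X) u v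

/-- The combinatorial isoperimetric ratio of a finite vertex set. -/
noncomputable def ratioC (Γ : MetricGraph) (X : Finset Γ.V) : ℝ :=
  ((Γ.Eb (↑X : Set Γ.V)).ncard : ℝ) / ∑ v ∈ X, (Γ.degree v : ℝ)

lemma sum_degree_pos {Γ : MetricGraph} {X : Finset Γ.V} (hX : X.Nonempty) :
    0 < ∑ v ∈ X, (Γ.degree v : ℝ) :=
  Finset.sum_pos (fun v _ => by exact_mod_cast Γ.degree_pos v) hX

lemma exists_conn_subset (Γ : MetricGraph) (X : Finset Γ.V) (hX : X.Nonempty) :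
    ∃ Y : Finset Γ.V, Y ⊆ X ∧ Y.Nonempty ∧ Γ.ConnFinset Y ∧ Γ.ratioC Y ≤ Γ.ratioC X := by
  induction X using Finset.strongInduction with
  | _ X ih =>
  by_cases hconn : Γ.ConnFinset X
  · exact ⟨X, subset_rfl, hX, hconn, le_rfl⟩
  · rw [ConnFinset] at hconn
    push_neg at hconn
    obtain ⟨u, hu, v, hv, huv⟩ := hconn
    set C : Finset Γ.V := X.filter (fun w => Relation.ReflTransGen (Γ.Rrel X) u w) with hC
    have hCsub : C ⊆ X := Finset.filter_subset _ _
    have hCu : u ∈ C := Finset.mem_filter.mpr ⟨hu, Relation.ReflTransGen.refl⟩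
    have hvC : v ∉ C := fun hvc => huv (Finset.mem_filter.mp hvc).2
    set D : Finset Γ.V := X \ C with hD
    have hvD : v ∈ D := Finset.mem_sdiff.mpr ⟨hv, hvC⟩
    have hclosed : ∀ a ∈ C, ∀ b, Γ.Rrel X a b → b ∈ C := by
      intro a ha b hab
      exact Finset.mem_filter.mpr ⟨hab.2.1, (Finset.mem_filter.mp ha).2.tail hab⟩
    -- no edge has one endpoint in C and the other in D
    have hcross : ∀ e : Γ.E, ¬((Γ.ends e).1 ∈ C ∧ (Γ.ends e).2 ∈ D) ∧
        ¬((Γ.ends e).2 ∈ C ∧ (Γ.ends e).1 ∈ D) := by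
      intro e
      constructor
      · rintro ⟨h1, h2⟩
        obtain ⟨h2X, h2C⟩ := Finset.mem_sdiff.mp h2
        exact h2C (hclosed _ h1 _ ⟨hCsub h1, h2X, e, Or.inl rfl⟩)
      · rintro ⟨h1, h2⟩
        obtain ⟨h2X, h2C⟩ := Finset.mem_sdiff.mp h2
        exact h2C (hclosed _ h1 _ ⟨hCsub h1, h2X, e, Or.inr rfl⟩)
    have hmemD : ∀ w : Γ.V, w ∈ D ↔ (w ∈ X ∧ w ∉ C) := fun w => Finset.mem_sdiff
    have hsplitX : ∀ w : Γ.V, w ∈ X ↔ (w ∈ C ∨ w ∈ D) := by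
      intro w
      constructor
      · intro hw
        by_cases hwc : w ∈ C
        · exact Or.inl hwc
        · exact Or.inr (Finset.mem_sdiff.mpr ⟨hw, hwc⟩)
      · rintro (hw | hw)
        · exact hCsub hw
        · exact (Finset.mem_sdiff.mp hw).1
    have hdisjCD : ∀ w : Γ.V, w ∈ C → w ∈ D → False := by
      intro w h1 h2
      exact (Finset.mem_sdiff.mp h2).2 h1
    have hunion : Γ.Eb (↑X : Set Γ.V) = Γ.Eb (↑C : Set Γ.V) ∪ Γ.Eb (↑D : Set Γ.V) := by
      ext e
      have h1 := (hcross e).1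
      have h2 := (hcross e).2
      simp only [Eb, Set.mem_setOf_eq, Set.mem_union, Finset.mem_coe, Xor'] at *
      constructor
      · rintro (⟨ha, hb⟩ | ⟨ha, hb⟩)
        · rcases (hsplitX _).mp ha with h | h
          · refine Or.inl (Or.inl ⟨h, fun hc => hb ((hsplitX _).mpr (Or.inl hc))⟩)
          · refine Or.inr (Or.inl ⟨h, fun hc => hb ((hsplitX _).mpr (Or.inr hc))⟩)
        · rcases (hsplitX _).mp ha with h | h
          · refine Or.inl (Or.inr ⟨h, fun hc => hb ((hsplitX _).mpr (Or.inl hc))⟩)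
          · refine Or.inr (Or.inr ⟨h, fun hc => hb ((hsplitX _).mpr (Or.inr hc))⟩)
      · rintro ((⟨ha, hb⟩ | ⟨ha, hb⟩) | (⟨ha, hb⟩ | ⟨ha, hb⟩))
        · refine Or.inl ⟨(hsplitX _).mpr (Or.inl ha), fun hx => ?_⟩
          rcases (hsplitX _).mp hx with h | h
          · exact hb h
          · exact h1 ⟨ha, h⟩
        · refine Or.inr ⟨(hsplitX _).mpr (Or.inl ha), fun hx => ?_⟩
          rcases (hsplitX _).mp hx with h | h
          · exact hb h
          · exact h2 ⟨ha, h⟩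
        · refine Or.inl ⟨(hsplitX _).mpr (Or.inr ha), fun hx => ?_⟩
          rcases (hsplitX _).mp hx with h | h
          · exact h2 ⟨h, ha⟩
          · exact hb h
        · refine Or.inr ⟨(hsplitX _).mpr (Or.inr ha), fun hx => ?_⟩
          rcases (hsplitX _).mp hx with h | h
          · exact h1 ⟨h, ha⟩
          · exact hb h
    have hdisjE : Disjoint (Γ.Eb (↑C : Set Γ.V)) (Γ.Eb (↑D : Set Γ.V)) := by
      rw [Set.disjoint_left]
      rintro e he1 he2
      simp only [Eb, Set.mem_setOf_eq, Finset.mem_coe, Xor'] at he1 he2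
      rcases he1 with ⟨ha, hb⟩ | ⟨ha, hb⟩ <;> rcases he2 with ⟨hc, hd⟩ | ⟨hc, hd⟩
      · exact hdisjCD _ ha hc
      · exact (hcross e).1 ⟨ha, hc⟩
      · exact (hcross e).2 ⟨ha, hc⟩
      · exact hdisjCD _ ha hc
    have hncard : ((Γ.Eb (↑X : Set Γ.V)).ncard : ℝ)
        = (Γ.Eb (↑C : Set Γ.V)).ncard + (Γ.Eb (↑D : Set Γ.V)).ncard := by
      rw [hunion, Set.ncard_union_eq hdisjE (Γ.Eb_finite C) (Γ.Eb_finite D)]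
      push_cast
      ring
    have hdeg : ∑ w ∈ X, (Γ.degree w : ℝ)
        = ∑ w ∈ C, (Γ.degree w : ℝ) + ∑ w ∈ D, (Γ.degree w : ℝ) := by
      rw [← Finset.sum_sdiff hCsub, ← hD]
      ring
    have hCne : C.Nonempty := ⟨u, hCu⟩
    have hDne : D.Nonempty := ⟨v, hvD⟩
    have hsC := sum_degree_pos hCne
    have hsD := sum_degree_pos hDne
    by_cases hcase : Γ.ratioC C ≤ Γ.ratioC X
    · -- C is connected
      have hCconn : Γ.ConnFinset C := by
        have haux : ∀ w, Relation.ReflTransGen (Γ.Rrel X) u w →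
            Relation.ReflTransGen (Γ.Rrel C) u w := by
          intro w hw
          induction hw with
          | refl => exact Relation.ReflTransGen.refl
          | tail hab hbc ih =>
            rename_i b c
            have hb : b ∈ C := Finset.mem_filter.mpr ⟨hbc.1, hab⟩
            have hc : c ∈ C := hclosed _ hb _ hbc
            exact ih.tail ⟨hb, hc, hbc.2.2⟩
        intro w hw w' hw'
        have h1 := haux w (Finset.mem_filter.mp hw).2
        have h2 := haux w' (Finset.mem_filter.mp hw').2
        exact (Std.Symm.symm (self := @Relation.ReflTransGen.symmetric _ _ ⟨fun a b h => Γ.Rrel_symm C h⟩) _ _ h1).trans h2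
      exact ⟨C, hCsub, hCne, hCconn, hcase⟩
    · -- recurse on D
      have hDssub : D ⊂ X := (Finset.ssubset_iff_of_subset Finset.sdiff_subset).mpr
        ⟨u, hu, fun huD => hdisjCD u hCu huD⟩
      have hratioD : Γ.ratioC D ≤ Γ.ratioC X := by
        push_neg at hcase
        simp only [ratioC] at hcase ⊢
        rw [hncard, hdeg] at hcase ⊢
        set nC := ((Γ.Eb (↑C : Set Γ.V)).ncard : ℝ)
        set nD := ((Γ.Eb (↑D : Set Γ.V)).ncard : ℝ)
        set sC := ∑ w ∈ C, (Γ.degree w : ℝ)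
        set sD := ∑ w ∈ D, (Γ.degree w : ℝ)
        have hsCD : (0:ℝ) < sC + sD := by linarith
        rw [div_lt_div_iff₀ hsCD hsC] at hcase
        rw [div_le_div_iff₀ hsD hsCD]
        nlinarith [hcase]
      obtain ⟨Y, hY1, hY2, hY3, hY4⟩ := ih D hDssub hDne
      exact ⟨Y, hY1.trans (Finset.sdiff_subset), hY2, hY3, hY4.trans hratioD⟩

end MetricGraph

namespace MetricGraph

lemma alphaComb_nonneg (Γ : MetricGraph) : 0 ≤ Γ.alphaComb := by
  apply Real.sInf_nonneg
  rintro r ⟨X, hX, rfl⟩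
  positivity

lemma alphaComb_le (Γ : MetricGraph) (X : Finset Γ.V) (hX : X.Nonempty) :
    Γ.alphaComb ≤ ((Γ.Eb (↑X : Set Γ.V)).ncard : ℝ) / ∑ v ∈ X, (Γ.degree v : ℝ) := by
  rw [alphaComb]
  exact csInf_le ⟨0, by rintro r ⟨Z, hZ, rfl⟩; positivity⟩ ⟨X, hX, rfl⟩

lemma partA (Γ : MetricGraph) (h : BddAbove (Set.range Γ.len)) (F : Finset Γ.E)
    (hF : Γ.IsFinSubgraph F) :
    2 * Γ.alphaComb / (Γ.ellSup * (1 + Γ.alphaComb)) ≤ Γ.degBdry F / Γ.mes F := by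
  obtain ⟨hFne, -⟩ := hF
  obtain ⟨e₁, he₁⟩ := hFne
  have ha0 : 0 ≤ Γ.alphaComb := Γ.alphaComb_nonneg
  have hLlen : ∀ e, Γ.len e ≤ Γ.ellSup := fun e => le_csSup h (Set.mem_range_self e)
  have hL0 : 0 < Γ.ellSup := lt_of_lt_of_le (Γ.len_pos e₁) (hLlen e₁)
  have hM0 : 0 < Γ.mes F := Finset.sum_pos (fun e _ => Γ.len_pos e) ⟨e₁, he₁⟩
  have hMle : Γ.mes F ≤ Γ.ellSup * F.card := by
    calc Γ.mes F ≤ ∑ _e ∈ F, Γ.ellSup := Finset.sum_le_sum fun e _ => hLlen e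
    _ = Γ.ellSup * F.card := by rw [Finset.sum_const, nsmul_eq_mul]; ring
  have hand := Γ.handshake F
  have hBsub : Γ.bdry F ⊆ Γ.vertsOf F := Finset.filter_subset _ _
  have hdegB : Γ.degBdry F = ((∑ v ∈ Γ.bdry F, Γ.degIn F v : ℕ) : ℝ) := by
    rw [degBdry, Nat.cast_sum]
  have hXisum : ∑ v ∈ Γ.vertsOf F \ Γ.bdry F, Γ.degIn F v
      + ∑ v ∈ Γ.bdry F, Γ.degIn F v = 2 * F.card := by
    rw [Finset.sum_sdiff hBsub]
    exact hand
  have hXidege : ∀ v ∈ Γ.vertsOf F \ Γ.bdry F, Γ.degIn F v = Γ.degree v := by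
    intro v hv
    obtain ⟨hvV, hvB⟩ := Finset.mem_sdiff.mp hv
    have hnot : ¬ (Γ.degIn F v < Γ.degree v) := by
      intro hlt
      exact hvB (Finset.mem_filter.mpr ⟨hvV, hlt⟩)
    exact le_antisymm (Γ.degIn_le_degree F v) (not_lt.mp hnot)
  have key : Γ.alphaComb * (2 * F.card - ((∑ v ∈ Γ.bdry F, Γ.degIn F v : ℕ) : ℝ))
      ≤ ((∑ v ∈ Γ.bdry F, Γ.degIn F v : ℕ) : ℝ) := by
    rcases Finset.eq_empty_or_nonempty (Γ.vertsOf F \ Γ.bdry F) with hXe | hXne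
    · have hDn : ∑ v ∈ Γ.bdry F, Γ.degIn F v = 2 * F.card := by
        rw [← hXisum, hXe, Finset.sum_empty, zero_add]
      rw [hDn]
      push_cast
      simp
    · have hsXi : 0 < ∑ v ∈ Γ.vertsOf F \ Γ.bdry F, (Γ.degree v : ℝ) := sum_degree_pos hXne
      have hEb_le : (Γ.Eb (↑(Γ.vertsOf F \ Γ.bdry F) : Set Γ.V)).ncard
          ≤ ∑ v ∈ Γ.bdry F, Γ.degIn F v := by
        have hsub : Γ.Eb (↑(Γ.vertsOf F \ Γ.bdry F) : Set Γ.V) ⊆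
            ↑((Γ.bdry F).biUnion fun w => F.filter fun e =>
              (Γ.ends e).1 = w ∨ (Γ.ends e).2 = w) := by
          intro e he
          simp only [Eb, Set.mem_setOf_eq, Finset.mem_coe, Xor'] at he
          rcases he with ⟨h1, h2⟩ | ⟨h1, h2⟩
          · have heF : e ∈ F := mem_of_degIn_eq (hXidege _ h1) (Or.inl rfl)
            have h2V : (Γ.ends e).2 ∈ Γ.vertsOf F := mem_vertsOf_iff.mpr ⟨e, heF, Or.inr rfl⟩
            have h2B : (Γ.ends e).2 ∈ Γ.bdry F := by
              by_contra hc
              exact h2 (Finset.mem_sdiff.mpr ⟨h2V, hc⟩)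
            exact Finset.mem_coe.mpr (Finset.mem_biUnion.mpr
              ⟨_, h2B, Finset.mem_filter.mpr ⟨heF, Or.inr rfl⟩⟩)
          · have heF : e ∈ F := mem_of_degIn_eq (hXidege _ h1) (Or.inr rfl)
            have h2V : (Γ.ends e).1 ∈ Γ.vertsOf F := mem_vertsOf_iff.mpr ⟨e, heF, Or.inl rfl⟩
            have h2B : (Γ.ends e).1 ∈ Γ.bdry F := by
              by_contra hc
              exact h2 (Finset.mem_sdiff.mpr ⟨h2V, hc⟩)
            exact Finset.mem_coe.mpr (Finset.mem_biUnion.mpr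
              ⟨_, h2B, Finset.mem_filter.mpr ⟨heF, Or.inl rfl⟩⟩)
        calc (Γ.Eb (↑(Γ.vertsOf F \ Γ.bdry F) : Set Γ.V)).ncard
            ≤ (↑((Γ.bdry F).biUnion fun w => F.filter fun e =>
                (Γ.ends e).1 = w ∨ (Γ.ends e).2 = w) : Set Γ.E).ncard :=
              Set.ncard_le_ncard hsub (Finset.finite_toSet _)
          _ = ((Γ.bdry F).biUnion fun w => F.filter fun e =>
                (Γ.ends e).1 = w ∨ (Γ.ends e).2 = w).card := Set.ncard_coe_finset _
          _ ≤ ∑ w ∈ Γ.bdry F, (F.filter fun e =>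
                (Γ.ends e).1 = w ∨ (Γ.ends e).2 = w).card := Finset.card_biUnion_le
          _ = ∑ v ∈ Γ.bdry F, Γ.degIn F v := rfl
      have hale := Γ.alphaComb_le _ hXne
      have h1 : Γ.alphaComb * (∑ v ∈ Γ.vertsOf F \ Γ.bdry F, (Γ.degree v : ℝ))
          ≤ ((Γ.Eb (↑(Γ.vertsOf F \ Γ.bdry F) : Set Γ.V)).ncard : ℝ) :=
        (le_div_iff₀ hsXi).mp hale
      have hXisum' : (∑ v ∈ Γ.vertsOf F \ Γ.bdry F, (Γ.degree v : ℝ))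
          = 2 * F.card - ((∑ v ∈ Γ.bdry F, Γ.degIn F v : ℕ) : ℝ) := by
        have heq : (∑ v ∈ Γ.vertsOf F \ Γ.bdry F, (Γ.degree v : ℝ))
            = ∑ v ∈ Γ.vertsOf F \ Γ.bdry F, (Γ.degIn F v : ℝ) := by
          apply Finset.sum_congr rfl
          intro v hv
          rw [hXidege v hv]
        rw [heq]
        have hcast : ((∑ v ∈ Γ.vertsOf F \ Γ.bdry F, Γ.degIn F v : ℕ) : ℝ)
            + ((∑ v ∈ Γ.bdry F, Γ.degIn F v : ℕ) : ℝ) = ((2 * F.card : ℕ) : ℝ) := by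
          exact_mod_cast congrArg (fun n : ℕ => (n : ℝ)) hXisum
        push_cast at hcast ⊢
        linarith
      rw [hXisum'] at h1
      have h2 : ((Γ.Eb (↑(Γ.vertsOf F \ Γ.bdry F) : Set Γ.V)).ncard : ℝ)
          ≤ ((∑ v ∈ Γ.bdry F, Γ.degIn F v : ℕ) : ℝ) := by exact_mod_cast hEb_le
      linarith
  rw [hdegB, div_le_div_iff₀ (by positivity) hM0]
  nlinarith [mul_le_mul_of_nonneg_left hMle (by positivity : (0:ℝ) ≤ 2 * Γ.alphaComb),
    mul_le_mul_of_nonneg_left key hL0.le, hL0, ha0, hM0,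
    (by positivity : (0:ℝ) ≤ ((∑ v ∈ Γ.bdry F, Γ.degIn F v : ℕ) : ℝ))]

end MetricGraph

namespace MetricGraph

lemma len_ge_ellInf (Γ : MetricGraph) (e : Γ.E) : Γ.ellInf ≤ Γ.len e :=
  csInf_le ⟨0, by rintro x ⟨e', rfl⟩; exact (Γ.len_pos e').le⟩ (Set.mem_range_self e)

lemma degBdry_nonneg (Γ : MetricGraph) (F : Finset Γ.E) : 0 ≤ Γ.degBdry F :=
  Finset.sum_nonneg fun v _ => by positivity

lemma mes_nonneg (Γ : MetricGraph) (F : Finset Γ.E) : 0 ≤ Γ.mes F :=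
  Finset.sum_nonneg fun e _ => (Γ.len_pos e).le

lemma alpha_le_ratio (Γ : MetricGraph) (F : Finset Γ.E) (hF : Γ.IsFinSubgraph F) :
    Γ.alpha ≤ Γ.degBdry F / Γ.mes F := by
  rw [alpha]
  refine csInf_le ⟨0, ?_⟩ ⟨F, hF, rfl⟩
  rintro r ⟨G, hG, rfl⟩
  have h0 := Γ.degBdry_nonneg G
  have h1 := Γ.mes_nonneg G
  positivity

lemma partB (Γ : MetricGraph) (hl : 0 < Γ.ellInf) :
    Γ.alpha ≤ 2 * Γ.alphaComb / Γ.ellInf := by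
  apply le_of_forall_pos_le_add
  intro δ hδ
  have hV : Nonempty Γ.V := by haveI := Γ.infV; infer_instance
  obtain ⟨v₀⟩ := hV
  have hε0 : 0 < δ * Γ.ellInf / 2 := by positivity
  have hSne : {r : ℝ | ∃ X : Finset Γ.V, X.Nonempty ∧
      r = ((Γ.Eb ↑X).ncard : ℝ) / ∑ v ∈ X, (Γ.degree v : ℝ)}.Nonempty :=
    ⟨_, ⟨{v₀}, Finset.singleton_nonempty v₀, rfl⟩⟩
  obtain ⟨r, hrmem, hrlt⟩ := Real.lt_sInf_add_pos hSne hε0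
  obtain ⟨X, hXne, rfl⟩ := hrmem
  have hrlt' : Γ.ratioC X < Γ.alphaComb + δ * Γ.ellInf / 2 := hrlt
  obtain ⟨Y, hYX, hYne, hYconn, hYratio⟩ := Γ.exists_conn_subset X hXne
  have hratY : Γ.ratioC Y < Γ.alphaComb + δ * Γ.ellInf / 2 := lt_of_le_of_lt hYratio hrlt'
  -- the finite subgraph: all edges incident to Y
  set F : Finset Γ.E := Y.biUnion (fun v => (Γ.locfin v).toFinset) with hFdef
  have hinF : ∀ e : Γ.E, e ∈ F ↔ ∃ y ∈ Y, (Γ.ends e).1 = y ∨ (Γ.ends e).2 = y := by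
    intro e
    simp only [hFdef, Finset.mem_biUnion, Set.Finite.mem_toFinset]
    rfl
  have hYsub : ∀ y ∈ Y, y ∈ Γ.vertsOf F := by
    intro y hy
    obtain ⟨e, he⟩ := Γ.exists_inc y
    exact mem_vertsOf_iff.mpr ⟨e, (hinF e).mpr ⟨y, hy, he⟩, he⟩
  have hFne : F.Nonempty := by
    obtain ⟨y, hy⟩ := hYne
    obtain ⟨e, he⟩ := Γ.exists_inc y
    exact ⟨e, (hinF e).mpr ⟨y, hy, he⟩⟩
  have hfull : ∀ v ∈ Y,
      F.filter (fun e => (Γ.ends e).1 = v ∨ (Γ.ends e).2 = v) = (Γ.locfin v).toFinset := by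
    intro v hv
    ext e
    simp only [Finset.mem_filter, Set.Finite.mem_toFinset]
    constructor
    · rintro ⟨-, h⟩; exact h
    · intro h; exact ⟨(hinF e).mpr ⟨v, hv, h⟩, h⟩
  have hdegfull : ∀ v ∈ Y, Γ.degIn F v = Γ.degree v := by
    intro v hv
    rw [degIn, hfull v hv, degree]
  have hbdry_notY : ∀ w ∈ Γ.bdry F, w ∉ Y := by
    intro w hw hwY
    have := (Finset.mem_filter.mp hw).2
    rw [hdegfull w hwY] at this
    exact lt_irrefl _ this
  -- connectivity
  have hsubconn : Γ.SubConn F := by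
    apply subConn_of_rtg hFne
    intro u hu v hv
    set H := SimpleGraph.fromRel fun u v => ∃ e ∈ F, Γ.ends e = (u, v) with hH
    set R := fun a b => a ∈ Γ.vertsOf F ∧ b ∈ Γ.vertsOf F ∧ H.Adj a b with hR
    have hRsymm : Symmetric R := by
      rintro a b ⟨h1, h2, h3⟩
      exact ⟨h2, h1, h3.symm⟩
    have hstep : ∀ x ∈ Γ.vertsOf F, ∃ y ∈ Y, Relation.ReflTransGen R x y := by
      intro x hx
      obtain ⟨e, heF, hinc⟩ := mem_vertsOf_iff.mp hx
      obtain ⟨y, hy, hincy⟩ := (hinF e).mp heF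
      by_cases hxy : x = y
      · exact ⟨y, hy, hxy ▸ Relation.ReflTransGen.refl⟩
      · refine ⟨y, hy, Relation.ReflTransGen.single ⟨hx, hYsub y hy, ?_⟩⟩
        rw [hH, SimpleGraph.fromRel_adj]
        refine ⟨hxy, ?_⟩
        rcases Γ.prod_eq_of_inc hinc hincy hxy with h | h
        · exact Or.inl ⟨e, heF, h⟩
        · exact Or.inr ⟨e, heF, h⟩
    have hYY : ∀ y ∈ Y, ∀ y' ∈ Y, Relation.ReflTransGen R y y' := by
      intro y hy y' hy'
      refine Relation.ReflTransGen.mono ?_ _ _ (hYconn y hy y' hy')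
      rintro a b ⟨ha, hb, e, he⟩
      have hne : a ≠ b := by
        intro hab
        subst hab
        rcases he with he | he <;> exact Γ.no_loops e (by rw [he])
      have heF : e ∈ F := by
        refine (hinF e).mpr ⟨a, ha, ?_⟩
        rcases he with he | he
        · exact Or.inl (by rw [he])
        · exact Or.inr (by rw [he])
      refine ⟨hYsub a ha, hYsub b hb, ?_⟩
      rw [hH, SimpleGraph.fromRel_adj]
      refine ⟨hne, ?_⟩
      rcases he with he | he
      · exact Or.inl ⟨e, heF, he⟩
      · exact Or.inr ⟨e, heF, he⟩
    obtain ⟨y, hy, hxy⟩ := hstep u hu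
    obtain ⟨y', hy', hxy'⟩ := hstep v hv
    exact (hxy.trans (hYY y hy y' hy')).trans
      (Std.Symm.symm (self := @Relation.ReflTransGen.symmetric _ _ ⟨fun a b h => hRsymm h⟩) _ _ hxy')
  -- boundary degree is at most the number of boundary edges of Y
  have hdisj : ∀ w ∈ Γ.bdry F, ∀ w' ∈ Γ.bdry F, w ≠ w' →
      Disjoint (F.filter fun e => (Γ.ends e).1 = w ∨ (Γ.ends e).2 = w)
        (F.filter fun e => (Γ.ends e).1 = w' ∨ (Γ.ends e).2 = w') := by
    intro w hw w' hw' hne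
    rw [Finset.disjoint_left]
    intro e he1 he2
    obtain ⟨heF, hi1⟩ := Finset.mem_filter.mp he1
    obtain ⟨-, hi2⟩ := Finset.mem_filter.mp he2
    obtain ⟨y, hy, hiy⟩ := (hinF e).mp heF
    have hwY := hbdry_notY w hw
    have hw'Y := hbdry_notY w' hw'
    rcases hi1 with h1 | h1 <;> rcases hi2 with h2 | h2 <;> rcases hiy with h3 | h3 <;>
      simp_all
  have hbU : ((Γ.bdry F).biUnion fun w => F.filter fun e =>
      (Γ.ends e).1 = w ∨ (Γ.ends e).2 = w).card = ∑ w ∈ Γ.bdry F, Γ.degIn F w :=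
    Finset.card_biUnion hdisj
  have hsubEb : ((Γ.bdry F).biUnion fun w => F.filter fun e =>
      (Γ.ends e).1 = w ∨ (Γ.ends e).2 = w) ⊆ (Γ.Eb_finite Y).toFinset := by
    intro e he
    obtain ⟨w, hw, hef⟩ := Finset.mem_biUnion.mp he
    obtain ⟨heF, hincw⟩ := Finset.mem_filter.mp hef
    obtain ⟨y, hy, hincy⟩ := (hinF e).mp heF
    have hwY := hbdry_notY w hw
    have hwy : w ≠ y := fun hq => hwY (hq ▸ hy)
    rw [Set.Finite.mem_toFinset]
    simp only [Eb, Set.mem_setOf_eq, Xor']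
    rcases Γ.prod_eq_of_inc hincw hincy hwy with hws | hws
    · refine Or.inr ⟨?_, ?_⟩
      · rw [hws]; exact Finset.mem_coe.mpr hy
      · rw [hws]; exact fun hc => hwY (Finset.mem_coe.mp hc)
    · refine Or.inl ⟨?_, ?_⟩
      · rw [hws]; exact Finset.mem_coe.mpr hy
      · rw [hws]; exact fun hc => hwY (Finset.mem_coe.mp hc)
  have hD_le : Γ.degBdry F ≤ ((Γ.Eb (↑Y : Set Γ.V)).ncard : ℝ) := by
    have h1 : ∑ w ∈ Γ.bdry F, Γ.degIn F w ≤ (Γ.Eb (↑Y : Set Γ.V)).ncard := by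
      rw [← hbU]
      calc ((Γ.bdry F).biUnion fun w => F.filter fun e =>
              (Γ.ends e).1 = w ∨ (Γ.ends e).2 = w).card
          ≤ (Γ.Eb_finite Y).toFinset.card := Finset.card_le_card hsubEb
        _ = (Γ.Eb (↑Y : Set Γ.V)).ncard :=
            (Set.ncard_eq_toFinset_card _ (Γ.Eb_finite Y)).symm
    rw [degBdry, ← Nat.cast_sum]
    exact_mod_cast h1
  -- degree sum bound
  have hcard2 : ∑ v ∈ Y, Γ.degree v ≤ 2 * F.card := by
    have h1 : ∑ v ∈ Y, Γ.degree v = ∑ v ∈ Y, Γ.degIn F v :=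
      Finset.sum_congr rfl fun v hv => (hdegfull v hv).symm
    rw [h1, Γ.sum_degIn_comm F Y]
    have h2 : ∀ e ∈ F, (Y.filter fun v => (Γ.ends e).1 = v ∨ (Γ.ends e).2 = v).card ≤ 2 := by
      intro e _
      have hsub2 : (Y.filter fun v => (Γ.ends e).1 = v ∨ (Γ.ends e).2 = v)
          ⊆ {(Γ.ends e).1, (Γ.ends e).2} := by
        intro v hv
        rcases (Finset.mem_filter.mp hv).2 with hh | hh
        · exact Finset.mem_insert.mpr (Or.inl hh.symm)
        · exact Finset.mem_insert.mpr (Or.inr (Finset.mem_singleton.mpr hh.symm))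
      calc (Y.filter fun v => (Γ.ends e).1 = v ∨ (Γ.ends e).2 = v).card
          ≤ ({(Γ.ends e).1, (Γ.ends e).2} : Finset Γ.V).card := Finset.card_le_card hsub2
        _ ≤ 2 := (Finset.card_insert_le _ _).trans (by simp)
    calc ∑ e ∈ F, (Y.filter fun v => (Γ.ends e).1 = v ∨ (Γ.ends e).2 = v).card
        ≤ ∑ _e ∈ F, 2 := Finset.sum_le_sum h2
      _ = 2 * F.card := by rw [Finset.sum_const, smul_eq_mul, mul_comm]
  have hmes : Γ.ellInf * (F.card : ℝ) ≤ Γ.mes F := by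
    calc Γ.ellInf * (F.card : ℝ) = ∑ _e ∈ F, Γ.ellInf := by
          rw [Finset.sum_const, nsmul_eq_mul]; ring
      _ ≤ Γ.mes F := Finset.sum_le_sum fun e _ => Γ.len_ge_ellInf e
  have hsY : 0 < ∑ v ∈ Y, (Γ.degree v : ℝ) := sum_degree_pos hYne
  have hsle : (∑ v ∈ Y, (Γ.degree v : ℝ)) ≤ 2 * (F.card : ℝ) := by
    exact_mod_cast hcard2
  have hmes2 : Γ.ellInf * (∑ v ∈ Y, (Γ.degree v : ℝ)) / 2 ≤ Γ.mes F := by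
    nlinarith [hmes, hl]
  have hmespos : 0 < Γ.ellInf * (∑ v ∈ Y, (Γ.degree v : ℝ)) / 2 := by positivity
  have hfrac : Γ.degBdry F / Γ.mes F
      ≤ ((Γ.Eb (↑Y : Set Γ.V)).ncard : ℝ) / (Γ.ellInf * (∑ v ∈ Y, (Γ.degree v : ℝ)) / 2) :=
    div_le_div₀ (by positivity) hD_le hmespos hmes2
  have heq2 : ((Γ.Eb (↑Y : Set Γ.V)).ncard : ℝ) / (Γ.ellInf * (∑ v ∈ Y, (Γ.degree v : ℝ)) / 2)
      = 2 * Γ.ratioC Y / Γ.ellInf := by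
    rw [ratioC]
    field_simp
  have halpha := Γ.alpha_le_ratio F ⟨hFne, hsubconn⟩
  have hfinal : 2 * Γ.ratioC Y / Γ.ellInf
      ≤ 2 * (Γ.alphaComb + δ * Γ.ellInf / 2) / Γ.ellInf := by
    gcongr
  have hlast : 2 * (Γ.alphaComb + δ * Γ.ellInf / 2) / Γ.ellInf
      = 2 * Γ.alphaComb / Γ.ellInf + δ := by
    field_simp
  calc Γ.alpha ≤ Γ.degBdry F / Γ.mes F := halpha
    _ ≤ 2 * Γ.ratioC Y / Γ.ellInf := by rw [← heq2]; exact hfrac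
    _ ≤ 2 * (Γ.alphaComb + δ * Γ.ellInf / 2) / Γ.ellInf := hfinal
    _ = 2 * Γ.alphaComb / Γ.ellInf + δ := hlast

end MetricGraph


/-- **Relation between metric and combinatorial isoperimetric constants.**
If `ℓ*(G) < ∞`, then `2 α_comb(V)/(ℓ*(G)(1 + α_comb(V))) ≤ α(G)`; if moreover
`ℓ_*(G) > 0`, then `α(G) ≤ 2 α_comb(V)/ℓ_*(G)`. -/
theorem alpha_comb_bounds (Γ : MetricGraph) (h : BddAbove (Set.range Γ.len)) :
    2 * Γ.alphaComb / (Γ.ellSup * (1 + Γ.alphaComb)) ≤ Γ.alpha ∧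
    (0 < Γ.ellInf → Γ.alpha ≤ 2 * Γ.alphaComb / Γ.ellInf) := by
  constructor
  · have hE : Nonempty Γ.E := by haveI := Γ.infE; infer_instance
    obtain ⟨e₀⟩ := hE
    rw [MetricGraph.alpha]
    refine le_csInf ⟨_, ⟨{e₀}, Γ.isFinSubgraph_single e₀, rfl⟩⟩ ?_
    rintro r ⟨F, hF, rfl⟩
    exact Γ.partA h F hF
  · intro hl
    exact Γ.partB hl
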